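/- Let φ be a spectrum (in particular bounded). Then for every nonnegative real random variable X, ρ_φ(X) = inf_{g∈G} { E[g(X)] + ∫_0^1 g^*(φ(u)) du }, the equality holding in (−∞,∞]; in particular, if X is not integrable then both sides equal +∞. -/

import Mathlib

open MeasureTheory Set NNReal ENNReal

/-- Quantile function `F_X⁻¹(u) = inf {x | u ≤ F_X(x)}`. -/
noncomputable def quantile {Ω : Type*} [MeasurableSpace Ω] (P : Measure Ω)
    (X : Ω → ℝ) (u : ℝ) : ℝ :=
  sInf {x : ℝ | u ≤ (P {ω | X ω ≤ x}).toReal}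

/-- Spectral risk measure `ρ_φ(X) = ∫_0^1 F_X⁻¹(u) φ(u) du ∈ [0,∞]`. -/
noncomputable def specRisk {Ω : Type*} [MeasurableSpace Ω] (P : Measure Ω)
    (φ : ℝ → ℝ) (X : Ω → ℝ) : ℝ≥0∞ :=
  ∫⁻ u in Set.Ioo (0:ℝ) 1, ENNReal.ofReal (quantile P X u * φ u)

/-- `φ` is a spectrum. -/
def IsSpectrum (φ : ℝ → ℝ) : Prop :=
  MonotoneOn φ (Set.Icc 0 1) ∧ (∀ u ∈ Set.Icc (0:ℝ) 1, 0 ≤ φ u) ∧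
    (∀ t ∈ Set.Ico (0:ℝ) 1, ContinuousWithinAt φ (Set.Ici t) t) ∧
    (∫ u in Set.Ioo (0:ℝ) 1, φ u) = 1

/-- Convex conjugate `g^*(y) = sup_{s ∈ ℝ} (s y - g s)`, with values in `(-∞,∞]`. -/
noncomputable def conj (g : ℝ → ℝ) (y : ℝ) : EReal :=
  ⨆ s : ℝ, ((s * y - g s : ℝ) : EReal)

/-- The nonnegative part of an extended real number, as an element of `[0,∞]`. -/
noncomputable def erealToENNReal (x : EReal) : ℝ≥0∞ :=
  if x = ⊤ then ⊤ else ENNReal.ofReal x.toReal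

/-- Expectation `E[g(X)] ∈ (-∞,∞]` of `g(X)` when `g(X) ≥ b` pointwise
(written via the nonnegative part `g(X) - b`). -/
noncomputable def expFrom {Ω : Type*} [MeasurableSpace Ω] (P : Measure Ω)
    (g : ℝ → ℝ) (X : Ω → ℝ) (b : ℝ) : EReal :=
  ((∫⁻ ω, ENNReal.ofReal (g (X ω) - b) ∂P : ℝ≥0∞) : EReal) + (b : EReal)

/-- `∫_0^1 g^*(φ(u)) du ∈ (-∞,∞]`, written via the shift `g^*(φ(u)) + b ≥ 0`
(valid whenever `g^* ∘ φ ≥ -b` on `(0,1)`). -/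
noncomputable def intConj (φ : ℝ → ℝ) (g : ℝ → ℝ) (b : ℝ) : EReal :=
  ((∫⁻ u in Set.Ioo (0:ℝ) 1, erealToENNReal (conj g (φ u) + (b : EReal)) : ℝ≥0∞) : EReal)
    - (b : EReal)

/-- The set `G` of increasing convex functions `g : ℝ → ℝ`. -/
def IncConvex : Set (ℝ → ℝ) := {g | Monotone g ∧ ConvexOn ℝ Set.univ g}

/-! ### Auxiliary material -/

section Auxiliary
set_option linter.unusedSectionVars false
open ProbabilityTheory Filter Topology

/-- The quantile function of a measure on `ℝ`, via its cdf. -/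
noncomputable def qf (μ : Measure ℝ) (u : ℝ) : ℝ := sInf {x | u ≤ cdf μ x}

variable {μ : Measure ℝ} [IsProbabilityMeasure μ]

lemma qf_subset_Ici (hsupp : ∀ x < (0:ℝ), cdf μ x = 0) {u : ℝ} (hu : 0 < u) :
    {x | u ≤ cdf μ x} ⊆ Ici 0 := by
  intro x hx
  by_contra h
  simp only [mem_Ici, not_le] at h
  rw [mem_setOf_eq, hsupp x h] at hx
  linarith

lemma qf_set_nonempty {u : ℝ} (hu : u < 1) : ∃ x, u ≤ cdf μ x := by
  have := (tendsto_cdf_atTop μ).eventually (eventually_ge_nhds hu)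
  exact this.exists

lemma qf_le_iff (hsupp : ∀ x < (0:ℝ), cdf μ x = 0) {u : ℝ} (hu : u ∈ Ioo (0:ℝ) 1) (x : ℝ) :
    qf μ u ≤ x ↔ u ≤ cdf μ x := by
  constructor
  · intro h
    have hne : {x | u ≤ cdf μ x}.Nonempty := qf_set_nonempty hu.2
    have key : ∀ ε > (0:ℝ), u ≤ cdf μ (x + ε) := by
      intro ε hε
      obtain ⟨y, hy, hyx⟩ := exists_lt_of_csInf_lt hne (show qf μ u < x + ε by
        unfold qf at h ⊢; linarith)
      exact le_trans hy ((cdf μ).mono hyx.le)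
    have htend : Tendsto (cdf μ) (𝓝[>] x) (𝓝 (cdf μ x)) :=
      ((cdf μ).right_continuous x).mono_left (nhdsWithin_mono x Ioi_subset_Ici_self)
    refine ge_of_tendsto htend ?_
    filter_upwards [self_mem_nhdsWithin] with y hy
    have := key (y - x) (by simpa using hy)
    simpa using this
  · intro h
    exact csInf_le (bddBelow_Ici.mono (qf_subset_Ici hsupp hu.1)) h

lemma qf_nonneg (hsupp : ∀ x < (0:ℝ), cdf μ x = 0) {u : ℝ} (hu : u ∈ Ioo (0:ℝ) 1) :
    0 ≤ qf μ u :=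
  le_csInf (qf_set_nonempty hu.2) (fun _ hx => qf_subset_Ici hsupp hu.1 hx)

lemma qf_monotoneOn (hsupp : ∀ x < (0:ℝ), cdf μ x = 0) :
    MonotoneOn (qf μ) (Ioo (0:ℝ) 1) := by
  intro u hu v hv huv
  exact csInf_le_csInf (bddBelow_Ici.mono (qf_subset_Ici hsupp hu.1))
    (qf_set_nonempty hv.2) (fun x hx => le_trans huv hx)

lemma qf_aemeasurable (hsupp : ∀ x < (0:ℝ), cdf μ x = 0) :
    AEMeasurable (qf μ) (volume.restrict (Ioo (0:ℝ) 1)) :=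
  aemeasurable_restrict_of_monotoneOn measurableSet_Ioo (qf_monotoneOn hsupp)

lemma qf_map_eq (hsupp : ∀ x < (0:ℝ), cdf μ x = 0) :
    (volume.restrict (Ioo (0:ℝ) 1)).map (qf μ) = μ := by
  have hprob : IsProbabilityMeasure (volume.restrict (Ioo (0:ℝ) 1)) :=
    ⟨by simp [Measure.restrict_apply_univ, Real.volume_Ioo]⟩
  have hmap : IsProbabilityMeasure ((volume.restrict (Ioo (0:ℝ) 1)).map (qf μ)) :=
    Measure.isProbabilityMeasure_map (qf_aemeasurable hsupp)
  refine Measure.ext_of_Iic _ _ (fun x => ?_)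
  rw [Measure.map_apply_of_aemeasurable (qf_aemeasurable hsupp) measurableSet_Iic,
    Measure.restrict_apply' measurableSet_Ioo]
  have hset : qf μ ⁻¹' Iic x ∩ Ioo (0:ℝ) 1 = Iic (cdf μ x) ∩ Ioo (0:ℝ) 1 := by
    ext u
    simp only [mem_inter_iff, mem_preimage, mem_Iic, and_congr_left_iff]
    intro hu
    exact qf_le_iff hsupp hu x
  rw [hset]
  rcases lt_or_ge (cdf μ x) 1 with h1 | h1
  · have : Iic (cdf μ x) ∩ Ioo (0:ℝ) 1 = Ioc 0 (cdf μ x) := by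
      ext u
      simp only [mem_inter_iff, mem_Iic, mem_Ioo, mem_Ioc]
      constructor
      · rintro ⟨h, h0, _⟩; exact ⟨h0, h⟩
      · rintro ⟨h0, h⟩; exact ⟨h, h0, lt_of_le_of_lt h h1⟩
    rw [this, Real.volume_Ioc, ← ofReal_cdf μ x]
    simp
  · have h1' : cdf μ x = 1 := le_antisymm (cdf_le_one μ x) h1
    have : Iic (cdf μ x) ∩ Ioo (0:ℝ) 1 = Ioo 0 1 := by
      rw [inter_eq_right]
      exact fun u hu => le_trans hu.2.le (by rw [h1'])
    rw [this, Real.volume_Ioo, ← ofReal_cdf μ x, h1']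
    simp

lemma qf_lintegral (hsupp : ∀ x < (0:ℝ), cdf μ x = 0) {f : ℝ → ℝ≥0∞} (hf : Measurable f) :
    ∫⁻ u in Ioo (0:ℝ) 1, f (qf μ u) = ∫⁻ x, f x ∂μ := by
  conv_rhs => rw [← qf_map_eq hsupp]
  rw [lintegral_map' hf.aemeasurable (qf_aemeasurable hsupp)]

lemma quantile_eq_qf {Ω : Type*} [MeasurableSpace Ω] (P : Measure Ω)
    [IsProbabilityMeasure P] (X : Ω → ℝ) (hXm : Measurable X) :
    quantile P X = qf (P.map X) := by
  have : IsProbabilityMeasure (P.map X) := Measure.isProbabilityMeasure_map hXm.aemeasurable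
  funext u
  unfold quantile qf
  congr 1
  ext x
  rw [mem_setOf_eq, mem_setOf_eq, cdf_eq_real, measureReal_def, Measure.map_apply hXm measurableSet_Iic]
  rfl

lemma map_supp {Ω : Type*} [MeasurableSpace Ω] (P : Measure Ω)
    [IsProbabilityMeasure P] (X : Ω → ℝ) (hXm : Measurable X) (hX : ∀ ω, 0 ≤ X ω) :
    ∀ x < (0:ℝ), cdf (P.map X) x = 0 := by
  have : IsProbabilityMeasure (P.map X) := Measure.isProbabilityMeasure_map hXm.aemeasurable
  intro x hx
  rw [cdf_eq_real, measureReal_def, Measure.map_apply hXm measurableSet_Iic]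
  have : X ⁻¹' Iic x = ∅ := by
    ext ω; simp only [mem_preimage, mem_Iic, mem_empty_iff_false, iff_false, not_le]
    exact lt_of_lt_of_le hx (hX ω)
  rw [this]; simp

/-! ### The optimal convex function -/

variable (φ : ℝ → ℝ) (μ) in
/-- The optimal convex function `g₀(x) = ∫_0^x φ(F(t)) dt`. -/
noncomputable def g0 (x : ℝ) : ℝ := ∫ t in (0:ℝ)..x, φ (cdf μ t)

variable {φ : ℝ → ℝ}
variable (hmono : MonotoneOn φ (Icc 0 1)) (hpos : ∀ u ∈ Icc (0:ℝ) 1, 0 ≤ φ u)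

lemma cdf_mem_Icc (t : ℝ) : cdf μ t ∈ Icc (0:ℝ) 1 := ⟨cdf_nonneg μ t, cdf_le_one μ t⟩

include hmono in
lemma psi_mono : Monotone (fun t => φ (cdf μ t)) :=
  fun _ _ hab => hmono (cdf_mem_Icc _) (cdf_mem_Icc _) ((cdf μ).mono hab)

include hmono in
lemma psi_intInt (x y : ℝ) : IntervalIntegrable (fun t => φ (cdf μ t)) volume x y :=
  (psi_mono hmono).intervalIntegrable

include hmono in
lemma g0_zero : g0 μ φ 0 = 0 := intervalIntegral.integral_same

include hmono in
lemma g0_sub (x y : ℝ) : g0 μ φ y - g0 μ φ x = ∫ t in x..y, φ (cdf μ t) := by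
  have := intervalIntegral.integral_add_adjacent_intervals
    (psi_intInt (μ := μ) hmono 0 x) (psi_intInt (μ := μ) hmono x y)
  unfold g0; linarith

include hmono hpos in
lemma g0_mono : Monotone (g0 μ φ) := by
  intro x y hxy
  have h := g0_sub (μ := μ) hmono x y
  have : 0 ≤ ∫ t in x..y, φ (cdf μ t) :=
    intervalIntegral.integral_nonneg hxy (fun t _ => hpos _ (cdf_mem_Icc t))
  linarith

include hmono in
lemma g0_convex : ConvexOn ℝ univ (g0 μ φ) := by
  refine convexOn_of_slope_mono_adjacent convex_univ ?_
  intro x y z _ _ hxy hyz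
  have h1 : g0 μ φ y - g0 μ φ x ≤ (y - x) * φ (cdf μ y) := by
    rw [g0_sub hmono]
    calc (∫ t in x..y, φ (cdf μ t)) ≤ ∫ _t in x..y, φ (cdf μ y) :=
        intervalIntegral.integral_mono_on hxy.le (psi_intInt (μ := μ) hmono x y)
          intervalIntegrable_const (fun t ht => psi_mono (μ := μ) hmono ht.2)
      _ = (y - x) * φ (cdf μ y) := by simp [smul_eq_mul, mul_comm]
  have h2 : (z - y) * φ (cdf μ y) ≤ g0 μ φ z - g0 μ φ y := by
    rw [g0_sub hmono]
    calc (z - y) * φ (cdf μ y) = ∫ _t in y..z, φ (cdf μ y) := by simp [smul_eq_mul, mul_comm]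
      _ ≤ ∫ t in y..z, φ (cdf μ t) :=
        intervalIntegral.integral_mono_on hyz.le intervalIntegrable_const
          (psi_intInt (μ := μ) hmono y z) (fun t ht => psi_mono (μ := μ) hmono ht.1)
  rw [div_le_div_iff₀ (by linarith) (by linarith)]
  nlinarith [mul_le_mul_of_nonneg_left h1 (le_of_lt (show (0:ℝ) < z - y by linarith)),
    mul_le_mul_of_nonneg_left h2 (le_of_lt (show (0:ℝ) < y - x by linarith))]

include hmono in
lemma g0_key (hsupp : ∀ x < (0:ℝ), cdf μ x = 0) {u : ℝ} (hu : u ∈ Ioo (0:ℝ) 1) (s : ℝ) :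
    (s - qf μ u) * φ u ≤ g0 μ φ s - g0 μ φ (qf μ u) := by
  set q := qf μ u with hq
  have huIcc : u ∈ Icc (0:ℝ) 1 := ⟨hu.1.le, hu.2.le⟩
  rcases le_or_gt q s with h | h
  · rw [g0_sub hmono]
    have hFq : u ≤ cdf μ q := (qf_le_iff hsupp hu q).1 le_rfl
    calc (s - q) * φ u = ∫ _t in q..s, φ u := by simp [smul_eq_mul, mul_comm]
      _ ≤ ∫ t in q..s, φ (cdf μ t) := by
          refine intervalIntegral.integral_mono_on h intervalIntegrable_const
            (psi_intInt (μ := μ) hmono q s) (fun t ht => ?_)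
          exact hmono huIcc (cdf_mem_Icc t) (le_trans hFq ((cdf μ).mono ht.1))
  · have h' : g0 μ φ q - g0 μ φ s ≤ (q - s) * φ u := by
      rw [g0_sub hmono]
      have hae : (fun t => φ (cdf μ t)) ≤ᵐ[volume.restrict (Icc s q)] fun _ => φ u := by
        have hne : ∀ᵐ t ∂(volume.restrict (Icc s q)), t ≠ q :=
          ae_restrict_of_ae (by
            refine (ae_iff).2 ?_
            simpa using (Real.volume_singleton (a := q)))
        filter_upwards [hne, ae_restrict_mem measurableSet_Icc] with t ht htIcc
        have htq : t < q := lt_of_le_of_ne htIcc.2 ht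
        have : cdf μ t < u := by
          by_contra hc
          push_neg at hc
          exact absurd (csInf_le (bddBelow_Ici.mono (qf_subset_Ici hsupp hu.1)) hc)
            (not_le.2 htq)
        exact hmono (cdf_mem_Icc t) huIcc this.le
      calc (∫ t in s..q, φ (cdf μ t)) ≤ ∫ _t in s..q, φ u :=
          intervalIntegral.integral_mono_ae_restrict h.le (psi_intInt (μ := μ) hmono s q)
            intervalIntegrable_const hae
        _ = (q - s) * φ u := by simp [smul_eq_mul, mul_comm]
    nlinarith

include hmono in
lemma conj_g0_eq (hsupp : ∀ x < (0:ℝ), cdf μ x = 0) {u : ℝ} (hu : u ∈ Ioo (0:ℝ) 1) :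
    conj (g0 μ φ) (φ u) = ((qf μ u * φ u - g0 μ φ (qf μ u) : ℝ) : EReal) := by
  refine le_antisymm (iSup_le fun s => ?_) ?_
  · rw [EReal.coe_le_coe_iff]
    have := g0_key hmono hsupp hu s
    nlinarith
  · have := le_iSup (fun s => ((s * φ u - g0 μ φ s : ℝ) : EReal)) (qf μ u)
    exact this

/-! ### EReal / ENNReal bookkeeping -/

lemma erealToENNReal_coe (r : ℝ) : erealToENNReal (r : EReal) = ENNReal.ofReal r := by
  unfold erealToENNReal
  rw [if_neg (EReal.coe_ne_top r), EReal.toReal_coe]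

lemma ofReal_le_erealToENNReal {r : ℝ} {x : EReal} (h : (r : EReal) ≤ x) :
    ENNReal.ofReal r ≤ erealToENNReal x := by
  unfold erealToENNReal
  split_ifs with hx
  · exact le_top
  · refine ENNReal.ofReal_le_ofReal ?_
    have := EReal.toReal_le_toReal h (EReal.coe_ne_bot r) hx
    simpa using this

lemma ennreal_coe_sub_ne_bot (B : ℝ≥0∞) (b : ℝ) : (B : EReal) - (b : EReal) ≠ ⊥ := by
  rcases eq_or_ne B ⊤ with hB | hB
  · rw [hB, EReal.coe_ennreal_top, EReal.top_sub_coe]; exact (by simp : (⊤:EReal) ≠ ⊥)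
  · rw [← EReal.coe_toReal (x := (B:EReal)) (by simpa using hB) (EReal.coe_ennreal_ne_bot B),
      EReal.toReal_coe_ennreal, ← EReal.coe_sub]
    exact EReal.coe_ne_bot _

lemma ereal_arith (A B : ℝ≥0∞) (b : ℝ) :
    ((A : EReal) + (b : EReal)) + ((B : EReal) - (b : EReal)) = ((A + B : ℝ≥0∞) : EReal) := by
  rcases eq_or_ne A ⊤ with hA | hA
  · rw [hA, EReal.coe_ennreal_top, EReal.top_add_coe,
      EReal.top_add_of_ne_bot (ennreal_coe_sub_ne_bot B b), top_add,
      EReal.coe_ennreal_top]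
  rcases eq_or_ne B ⊤ with hB | hB
  · rw [hB, EReal.coe_ennreal_top, EReal.top_sub_coe, EReal.add_top_of_ne_bot (by
      rw [← EReal.coe_toReal (x := (A:EReal)) (by simpa using hA) (EReal.coe_ennreal_ne_bot A),
        EReal.toReal_coe_ennreal, ← EReal.coe_add]; exact EReal.coe_ne_bot _),
      add_top, EReal.coe_ennreal_top]
  · rw [← EReal.coe_toReal (x := (A:EReal)) (by simpa using hA) (EReal.coe_ennreal_ne_bot A),
      EReal.toReal_coe_ennreal,
      ← EReal.coe_toReal (x := (B:EReal)) (by simpa using hB) (EReal.coe_ennreal_ne_bot B),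
      EReal.toReal_coe_ennreal,
      ← EReal.coe_toReal (x := ((A+B:ℝ≥0∞):EReal))
        (by rw [Ne, EReal.coe_ennreal_eq_top_iff]; exact ENNReal.add_ne_top.2 ⟨hA, hB⟩)
        (EReal.coe_ennreal_ne_bot _),
      EReal.toReal_coe_ennreal, ENNReal.toReal_add hA hB,
      ← EReal.coe_add, ← EReal.coe_sub, ← EReal.coe_add]
    norm_num

end Auxiliary

/-- For a spectrum `φ` and every nonnegative random variable `X`,
`ρ_φ(X) = inf_{g ∈ G} { E[g(X)] + ∫_0^1 g^*(φ(u)) du }` in `(-∞,∞]`; in particular,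
if `X` is not integrable then both sides equal `+∞`. -/
theorem spectral_inf_representation {Ω : Type*} [MeasurableSpace Ω] (P : Measure Ω)
    [IsProbabilityMeasure P] (φ : ℝ → ℝ) (hφ : IsSpectrum φ)
    (X : Ω → ℝ) (hXm : Measurable X) (hX : ∀ ω, 0 ≤ X ω) :
    (((specRisk P φ X : ℝ≥0∞) : EReal)
        = ⨅ g ∈ IncConvex, expFrom P g X (g 0) + intConj φ g (g 0)) ∧
      (¬ Integrable X P →
        specRisk P φ X = ⊤ ∧
          (⨅ g ∈ IncConvex, expFrom P g X (g 0) + intConj φ g (g 0)) = (⊤ : EReal)) := by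
  classical
  obtain ⟨hmono, hpos, _, hint⟩ := hφ
  set μ := P.map X with hμ
  have hμprob : IsProbabilityMeasure μ := Measure.isProbabilityMeasure_map hXm.aemeasurable
  have hsupp : ∀ x < (0:ℝ), ProbabilityTheory.cdf μ x = 0 := map_supp P X hXm hX
  have hqe : quantile P X = qf μ := quantile_eq_qf P X hXm
  have hspec : specRisk P φ X = ∫⁻ u in Set.Ioo (0:ℝ) 1, ENNReal.ofReal (qf μ u * φ u) := by
    unfold specRisk; rw [hqe]
  -- Lower bound: `specRisk ≤` value at each `g`.
  have hle : ∀ g ∈ IncConvex, ((specRisk P φ X : ℝ≥0∞) : EReal)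
      ≤ expFrom P g X (g 0) + intConj φ g (g 0) := by
    intro g hg
    have hgm : Monotone g := hg.1
    have hg_meas : Measurable g := hgm.measurable
    have hf : Measurable (fun x : ℝ => ENNReal.ofReal (g x - g 0)) :=
      (hg_meas.sub measurable_const).ennreal_ofReal
    set A := ∫⁻ ω, ENNReal.ofReal (g (X ω) - g 0) ∂P with hA
    set B := ∫⁻ u in Set.Ioo (0:ℝ) 1,
      erealToENNReal (conj g (φ u) + ((g 0 : ℝ) : EReal)) with hB
    have hsum : expFrom P g X (g 0) + intConj φ g (g 0) = ((A + B : ℝ≥0∞) : EReal) :=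
      ereal_arith A B (g 0)
    rw [hsum, EReal.coe_ennreal_le_coe_ennreal_iff]
    have hAeq : A = ∫⁻ u in Set.Ioo (0:ℝ) 1, ENNReal.ofReal (g (qf μ u) - g 0) := by
      rw [hA, ← lintegral_map hf hXm, ← hμ, ← qf_lintegral hsupp hf]
    have hfq : AEMeasurable (fun u => ENNReal.ofReal (g (qf μ u) - g 0))
        (volume.restrict (Set.Ioo (0:ℝ) 1)) :=
      hf.comp_aemeasurable (qf_aemeasurable hsupp)
    rw [hspec, hAeq, hB, ← lintegral_add_left' hfq]
    refine lintegral_mono_ae ?_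
    filter_upwards [ae_restrict_mem measurableSet_Ioo] with u hu
    set q := qf μ u with hqdef
    have hq0 : 0 ≤ q := qf_nonneg hsupp hu
    have h1 : ((q * φ u - g q : ℝ) : EReal) ≤ conj g (φ u) :=
      le_iSup (fun s => ((s * φ u - g s : ℝ) : EReal)) q
    have h2 : ((q * φ u - (g q - g 0) : ℝ) : EReal)
        ≤ conj g (φ u) + ((g 0 : ℝ) : EReal) := by
      have : ((q * φ u - (g q - g 0) : ℝ) : EReal)
          = ((q * φ u - g q : ℝ) : EReal) + ((g 0 : ℝ) : EReal) := by
        rw [← EReal.coe_add]; norm_cast; ring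
      rw [this]
      exact add_le_add_left h1 _
    have h3 : ENNReal.ofReal (q * φ u - (g q - g 0))
        ≤ erealToENNReal (conj g (φ u) + ((g 0 : ℝ) : EReal)) :=
      ofReal_le_erealToENNReal h2
    calc ENNReal.ofReal (q * φ u)
        = ENNReal.ofReal ((g q - g 0) + (q * φ u - (g q - g 0))) := by ring_nf
      _ ≤ ENNReal.ofReal (g q - g 0) + ENNReal.ofReal (q * φ u - (g q - g 0)) :=
          ENNReal.ofReal_add_le
      _ ≤ ENNReal.ofReal (g q - g 0)
            + erealToENNReal (conj g (φ u) + ((g 0 : ℝ) : EReal)) := add_le_add_right h3 _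
  -- Value at the optimal `g₀`.
  have hGmem : g0 μ φ ∈ IncConvex := ⟨g0_mono hmono hpos, g0_convex hmono⟩
  have hG0 : g0 μ φ 0 = 0 := g0_zero (μ := μ) hmono
  have hval : expFrom P (g0 μ φ) X (g0 μ φ 0) + intConj φ (g0 μ φ) (g0 μ φ 0)
      = ((specRisk P φ X : ℝ≥0∞) : EReal) := by
    have hG_meas : Measurable (g0 μ φ) := (g0_mono hmono hpos).measurable
    have hf : Measurable (fun x : ℝ => ENNReal.ofReal (g0 μ φ x - g0 μ φ 0)) :=
      (hG_meas.sub measurable_const).ennreal_ofReal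
    set A := ∫⁻ ω, ENNReal.ofReal (g0 μ φ (X ω) - g0 μ φ 0) ∂P with hA
    set B := ∫⁻ u in Set.Ioo (0:ℝ) 1,
      erealToENNReal (conj (g0 μ φ) (φ u) + ((g0 μ φ 0 : ℝ) : EReal)) with hB
    have hsum : expFrom P (g0 μ φ) X (g0 μ φ 0) + intConj φ (g0 μ φ) (g0 μ φ 0)
        = ((A + B : ℝ≥0∞) : EReal) := ereal_arith A B (g0 μ φ 0)
    rw [hsum, EReal.coe_ennreal_eq_coe_ennreal_iff]
    have hAeq : A = ∫⁻ u in Set.Ioo (0:ℝ) 1,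
        ENNReal.ofReal (g0 μ φ (qf μ u) - g0 μ φ 0) := by
      rw [hA, ← lintegral_map hf hXm, ← hμ, ← qf_lintegral hsupp hf]
    have hfq : AEMeasurable (fun u => ENNReal.ofReal (g0 μ φ (qf μ u) - g0 μ φ 0))
        (volume.restrict (Set.Ioo (0:ℝ) 1)) :=
      hf.comp_aemeasurable (qf_aemeasurable hsupp)
    rw [hspec, hAeq, hB, ← lintegral_add_left' hfq]
    refine lintegral_congr_ae ?_
    filter_upwards [ae_restrict_mem measurableSet_Ioo] with u hu
    set q := qf μ u with hqdef
    have hq0 : 0 ≤ q := qf_nonneg hsupp hu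
    have hGq0 : 0 ≤ g0 μ φ q := by
      have := g0_mono (μ := μ) hmono hpos hq0
      rw [hG0] at this; exact this
    have hkey := g0_key hmono hsupp hu 0
    rw [hG0] at hkey
    have hGle : g0 μ φ q ≤ q * φ u := by nlinarith
    rw [hG0, conj_g0_eq hmono hsupp hu, EReal.coe_zero, add_zero, erealToENNReal_coe,
      sub_zero, ← ENNReal.ofReal_add hGq0 (by linarith)]
    congr 1
    ring
  have heq : ((specRisk P φ X : ℝ≥0∞) : EReal)
      = ⨅ g ∈ IncConvex, expFrom P g X (g 0) + intConj φ g (g 0) := by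
    refine le_antisymm (le_iInf₂ hle) ?_
    exact le_trans (iInf₂_le (g0 μ φ) hGmem) (le_of_eq hval)
  refine ⟨heq, fun hni => ?_⟩
  -- the non-integrable case
  have h1 : (∫⁻ ω, ENNReal.ofReal (X ω) ∂P) = ⊤ := by
    by_contra h
    exact hni ⟨hXm.aestronglyMeasurable,
      (hasFiniteIntegral_iff_ofReal (Filter.Eventually.of_forall hX)).2
        (lt_top_iff_ne_top.2 h)⟩
  have h2 : ∫⁻ u in Set.Ioo (0:ℝ) 1, ENNReal.ofReal (qf μ u) = ⊤ := by
    rw [qf_lintegral hsupp ENNReal.measurable_ofReal, hμ,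
      lintegral_map ENNReal.measurable_ofReal hXm]
    exact h1
  obtain ⟨u₀, hu₀, hφ0⟩ : ∃ u₀ ∈ Set.Ioo (0:ℝ) 1, 0 < φ u₀ := by
    by_contra h
    push_neg at h
    have hz : Set.EqOn φ (fun _ => (0:ℝ)) (Set.Ioo 0 1) :=
      fun u hu => le_antisymm (h u hu) (hpos u ⟨hu.1.le, hu.2.le⟩)
    rw [setIntegral_congr_fun measurableSet_Ioo hz] at hint
    simp at hint
  have hdisj : Disjoint (Set.Ioc (0:ℝ) u₀) (Set.Ioo u₀ 1) := by
    rw [Set.disjoint_left]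
    rintro u ⟨_, h⟩ ⟨h', _⟩
    exact absurd h' (not_lt.2 h)
  have hsplit : Set.Ioo (0:ℝ) 1 = Set.Ioc 0 u₀ ∪ Set.Ioo u₀ 1 := by
    ext u
    simp only [Set.mem_Ioo, Set.mem_Ioc, Set.mem_union]
    constructor
    · rintro ⟨h0, h1'⟩
      exact (le_or_gt u u₀).imp (fun h => ⟨h0, h⟩) (fun h => ⟨h, h1'⟩)
    · rintro (⟨h0, h⟩ | ⟨h, h1'⟩)
      · exact ⟨h0, lt_of_le_of_lt h hu₀.2⟩
      · exact ⟨lt_trans hu₀.1 h, h1'⟩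
  have hfin : ∫⁻ u in Set.Ioc (0:ℝ) u₀, ENNReal.ofReal (qf μ u) ≠ ⊤ := by
    have hb : ∫⁻ u in Set.Ioc (0:ℝ) u₀, ENNReal.ofReal (qf μ u)
        ≤ ∫⁻ _u in Set.Ioc (0:ℝ) u₀, ENNReal.ofReal (qf μ u₀) := by
      refine lintegral_mono_ae ?_
      filter_upwards [ae_restrict_mem measurableSet_Ioc] with u hu
      exact ENNReal.ofReal_le_ofReal
        (qf_monotoneOn hsupp ⟨hu.1, lt_of_le_of_lt hu.2 hu₀.2⟩ hu₀ hu.2)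
    refine ne_top_of_le_ne_top ?_ hb
    rw [lintegral_const, Measure.restrict_apply_univ, Real.volume_Ioc]
    exact ENNReal.mul_ne_top ENNReal.ofReal_ne_top ENNReal.ofReal_ne_top
  have htail : ∫⁻ u in Set.Ioo u₀ 1, ENNReal.ofReal (qf μ u) = ⊤ := by
    rw [hsplit, lintegral_union measurableSet_Ioo hdisj] at h2
    rcases ENNReal.add_eq_top.1 h2 with h | h
    · exact absurd h hfin
    · exact h
  have hstop : specRisk P φ X = ⊤ := by
    refine top_unique ?_
    calc (⊤:ℝ≥0∞) = ENNReal.ofReal (φ u₀) * ∫⁻ u in Set.Ioo u₀ 1, ENNReal.ofReal (qf μ u) := by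
          rw [htail, ENNReal.mul_top (ne_of_gt (ENNReal.ofReal_pos.2 hφ0))]
      _ ≤ ∫⁻ u in Set.Ioo u₀ 1, ENNReal.ofReal (φ u₀) * ENNReal.ofReal (qf μ u) :=
          lintegral_const_mul_le _ _
      _ ≤ ∫⁻ u in Set.Ioo u₀ 1, ENNReal.ofReal (qf μ u * φ u) := by
          refine lintegral_mono_ae ?_
          filter_upwards [ae_restrict_mem measurableSet_Ioo] with u hu
          rw [← ENNReal.ofReal_mul (hpos u₀ ⟨hu₀.1.le, hu₀.2.le⟩)]
          refine ENNReal.ofReal_le_ofReal ?_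
          have huI : u ∈ Set.Ioo (0:ℝ) 1 := ⟨lt_trans hu₀.1 hu.1, hu.2⟩
          have hmon : φ u₀ ≤ φ u :=
            hmono ⟨hu₀.1.le, hu₀.2.le⟩ ⟨huI.1.le, huI.2.le⟩ hu.1.le
          nlinarith [qf_nonneg hsupp huI, hpos u₀ ⟨hu₀.1.le, hu₀.2.le⟩]
      _ ≤ ∫⁻ u in Set.Ioo (0:ℝ) 1, ENNReal.ofReal (qf μ u * φ u) :=
          lintegral_mono' (Measure.restrict_mono
            (Set.Ioo_subset_Ioo hu₀.1.le le_rfl) le_rfl) le_rfl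
      _ = specRisk P φ X := hspec.symm
  refine ⟨hstop, ?_⟩
  rw [← heq, hstop, EReal.coe_ennreal_top]
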